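/- If g is a multiplicative arithmetic function, then the asymptotic density of supp(g) satisfies d(supp(g)) ≥ (6/π²)·∏_{p ∉ supp(g)} (1 + 1/p)^{-1}. -/

import Mathlib

open Filter Topology ArithmeticFunction

/-- Number of elements of `A` in `[1, N]`. -/
noncomputable def cnt (A : Set ℕ) (N : ℕ) : ℕ := (A ∩ Set.Icc 1 N).ncard

/-- `A ⊆ ℕ` has asymptotic density `d`. -/
def HasDensity (A : Set ℕ) (d : ℝ) : Prop :=
  Filter.Tendsto (fun N : ℕ => (cnt A N : ℝ) / N) Filter.atTop (nhds d)

/-- `A` is thin: the sum of the reciprocals of its elements converges. -/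
def Thin (A : Set ℕ) : Prop := Summable (fun a : A => (1 : ℝ) / a)

/- ### Auxiliary lemmas -/

/-- A product of reals in `[1/2, 1]` is multipliable provided `∑ (1 - f i)` converges. -/
lemma aux_multipliable_of_half {ι : Type*} (f : ι → ℝ) (h1 : ∀ i, 1/2 ≤ f i)
    (h2 : ∀ i, f i ≤ 1) (hs : Summable (fun i => 1 - f i)) : Multipliable f := by
  have hpos : ∀ i, 0 < f i := fun i => lt_of_lt_of_le (by norm_num) (h1 i)
  have hlog : Summable (fun i => Real.log (f i)) := by
    rw [← summable_neg_iff]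
    refine Summable.of_nonneg_of_le (fun i => ?_) (fun i => ?_) (hs.mul_left 2)
    · simp only [neg_nonneg]
      exact Real.log_nonpos (le_of_lt (hpos i)) (h2 i)
    · have h := h1 i; have h' := h2 i; have hp := hpos i
      have hb : -Real.log (f i) = Real.log (f i)⁻¹ := (Real.log_inv _).symm
      rw [hb]
      have : Real.log (f i)⁻¹ ≤ (f i)⁻¹ - 1 :=
        Real.log_le_sub_one_of_pos (by positivity)
      refine this.trans ?_
      rw [inv_eq_one_div, div_sub' hp.ne', div_le_iff₀ hp]
      nlinarith
  exact Real.multipliable_of_summable_log hpos hlog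

lemma aux_prod_one_add_ge {ι : Type*} (t : Finset ι) (f : ι → ℝ) (h : ∀ i ∈ t, 0 ≤ f i) :
    1 + ∑ i ∈ t, f i ≤ ∏ i ∈ t, (1 + f i) := by
  classical
  induction t using Finset.cons_induction with
  | empty => simp
  | cons a s ha ih =>
    rw [Finset.sum_cons, Finset.prod_cons]
    have h1 : ∀ i ∈ s, 0 ≤ f i := fun i hi => h i (Finset.mem_cons_of_mem hi)
    have h2 := ih h1
    have ha' : 0 ≤ f a := h a (Finset.mem_cons_self a s)
    have hsum : 0 ≤ ∑ i ∈ s, f i := Finset.sum_nonneg h1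
    nlinarith

/-- Tail sums of a summable series tend to zero. -/
lemma aux_tail_tendsto (f : ℕ → ℝ) (hf : Summable f) :
    Filter.Tendsto (fun y : ℕ => ∑' p, if y < p then f p else 0) Filter.atTop (nhds 0) := by
  classical
  have key : ∀ y : ℕ, (∑' p, if y < p then f p else 0) = ∑' k, f (k + (y + 1)) := by
    intro y
    have htr : Summable (fun p => if p < y + 1 then f p else 0) :=
      summable_of_ne_finset_zero (s := Finset.range (y + 1)) (by
        intro b hb
        simp only [Finset.mem_range] at hb
        simp [hb])
    have hpt : (fun p => if y < p then f p else 0)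
        = fun p => f p - (if p < y + 1 then f p else 0) := by
      funext p
      by_cases h : y < p
      · rw [if_pos h, if_neg (by omega)]; ring
      · rw [if_neg h, if_pos (by omega)]; ring
    rw [hpt, Summable.tsum_sub hf htr]
    have h1 : (∑' p, if p < y + 1 then f p else 0) = ∑ p ∈ Finset.range (y + 1), f p := by
      rw [tsum_eq_sum (s := Finset.range (y + 1)) (by
        intro b hb
        simp only [Finset.mem_range] at hb
        simp [hb])]
      apply Finset.sum_congr rfl
      intro b hb
      simp only [Finset.mem_range] at hb
      simp [hb]
    rw [h1]
    have h2 := Summable.sum_add_tsum_nat_add (f := f) (y + 1) hf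
    linarith
  simp only [key]
  have := (tendsto_sum_nat_add f).comp (tendsto_add_atTop_nat 1)
  exact this

lemma aux_prod_dvd {t : Finset ℕ} {m : ℕ → ℕ} {n : ℕ}
    (hcop : (t : Set ℕ).Pairwise fun p q => Nat.Coprime (m p) (m q))
    (h : ∀ p ∈ t, m p ∣ n) : (∏ p ∈ t, m p) ∣ n := by
  classical
  induction t using Finset.cons_induction with
  | empty => simpa using one_dvd n
  | cons a s ha ih =>
    rw [Finset.prod_cons]
    have hcop' : (s : Set ℕ).Pairwise fun p q => Nat.Coprime (m p) (m q) :=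
      hcop.mono (by simp [Finset.coe_cons, Set.subset_insert])
    have hd : (∏ p ∈ s, m p) ∣ n := ih hcop' (fun p hp => h p (Finset.mem_cons_of_mem hp))
    have hcab : Nat.Coprime (m a) (∏ p ∈ s, m p) := by
      apply Nat.Coprime.prod_right
      intro q hq
      exact hcop (by simp) (by simp [hq]) (by rintro rfl; exact ha hq)
    exact hcab.mul_dvd_of_dvd_of_dvd (h a (Finset.mem_cons_self a s)) hd

lemma aux_card_multiples (N q : ℕ) [inst : DecidablePred (q ∣ ·)] :
    ((Finset.Icc 1 N).filter (fun n => q ∣ n)).card = N / q := by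
  have : Finset.Icc 1 N = Finset.Ioc 0 N := rfl
  rw [this]
  have hinst : inst = fun n => Nat.decidable_dvd q n := Subsingleton.elim _ _
  subst hinst
  exact Nat.Ioc_filter_dvd_card_eq_div N q

lemma aux_div_cast_bounds (N q : ℕ) (hq : 1 ≤ q) :
    |((N / q : ℕ) : ℝ) - (N : ℝ) / q| ≤ 1 := by
  have hq' : (0 : ℝ) < q := by exact_mod_cast hq
  rw [abs_le]
  constructor
  · have h1 : (N : ℝ) / q - 1 ≤ ((N / q : ℕ) : ℝ) := by
      have hmod := Nat.div_add_mod N q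
      have hlt : N % q < q := Nat.mod_lt _ (by omega)
      have h : N < (N / q + 1) * q := by
        calc N = q * (N / q) + N % q := hmod.symm
        _ < q * (N / q) + q := by omega
        _ = (N / q + 1) * q := by ring
      have : (N : ℝ) < (((N / q : ℕ) : ℝ) + 1) * q := by exact_mod_cast h
      rw [sub_le_iff_le_add, div_le_iff₀ hq']
      nlinarith
    linarith
  · have h2 : ((N / q : ℕ) : ℝ) ≤ (N : ℝ) / q := Nat.cast_div_le
    linarith

/-- The completely multiplicative function `n ↦ (n²)⁻¹` on `ℝ`. -/
noncomputable def aux_sqInvHom : ℕ →*₀ ℝ where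
  toFun n := ((n:ℝ)^2)⁻¹
  map_zero' := by norm_num
  map_one' := by norm_num
  map_mul' a b := by push_cast; rw [mul_pow, mul_inv]

/-- Inclusion–exclusion sieve count. -/
lemma aux_sieve_count (N : ℕ) (P : Finset ℕ) (m : ℕ → ℕ) (hm : ∀ p ∈ P, 1 ≤ m p)
    (hcop : (P : Set ℕ).Pairwise fun p q => Nat.Coprime (m p) (m q)) :
    |((((Finset.Icc 1 N).filter (fun n => ∀ p ∈ P, ¬ m p ∣ n)).card : ℝ))
      - (N : ℝ) * ∏ p ∈ P, (1 - 1/(m p : ℝ))| ≤ 2 ^ P.card := by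
  classical
  set χ : ℕ → ℕ → ℝ := fun p n => if m p ∣ n then (1 : ℝ) else 0 with hχ
  -- the cardinality as a sum of indicator products
  have hcard : ((((Finset.Icc 1 N).filter (fun n => ∀ p ∈ P, ¬ m p ∣ n)).card : ℝ))
      = ∑ n ∈ Finset.Icc 1 N, ∏ p ∈ P, (1 - χ p n) := by
    rw [Finset.card_filter]
    push_cast
    refine Finset.sum_congr rfl (fun n _ => ?_)
    by_cases h : ∀ p ∈ P, ¬ m p ∣ n
    · rw [if_pos h]
      have h1 : ∀ p ∈ P, (1 : ℝ) - χ p n = 1 := fun p hp => by simp [hχ, h p hp]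
      rw [Finset.prod_congr rfl h1, Finset.prod_const_one]
    · rw [if_neg h]
      push_neg at h
      obtain ⟨p, hp, hdvd⟩ := h
      exact (Finset.prod_eq_zero hp (by simp [hχ, hdvd])).symm
  -- expand each indicator product by inclusion–exclusion
  have hexp : ∀ n, (∏ p ∈ P, (1 - χ p n))
      = ∑ t ∈ P.powerset, (-1 : ℝ) ^ t.card * (if (∏ p ∈ t, m p) ∣ n then (1 : ℝ) else 0) := by
    intro n
    have h0 : ∀ p ∈ P, (1 : ℝ) - χ p n = (-χ p n) + 1 := fun p _ => by ring
    rw [Finset.prod_congr rfl h0, Finset.prod_add]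
    refine Finset.sum_congr rfl (fun t ht => ?_)
    rw [Finset.prod_const_one, mul_one]
    have h1 : ∏ p ∈ t, (-χ p n) = (-1 : ℝ) ^ t.card * ∏ p ∈ t, χ p n := by
      rw [← Finset.prod_const (-1 : ℝ), ← Finset.prod_mul_distrib]
      exact Finset.prod_congr rfl (fun p _ => by ring)
    rw [h1]
    congr 1
    rw [hχ]
    simp only
    rw [Finset.prod_boole]
    refine if_congr ?_ rfl rfl
    constructor
    · intro h
      exact aux_prod_dvd (hcop.mono (by exact_mod_cast Finset.mem_powerset.mp ht)) h
    · intro h p hp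
      exact dvd_trans (Finset.dvd_prod_of_mem m hp) h
  -- so the count equals an alternating sum of floor-counts
  have hcount : ((((Finset.Icc 1 N).filter (fun n => ∀ p ∈ P, ¬ m p ∣ n)).card : ℝ))
      = ∑ t ∈ P.powerset, (-1 : ℝ) ^ t.card * ((N / (∏ p ∈ t, m p) : ℕ) : ℝ) := by
    rw [hcard]
    rw [Finset.sum_congr rfl (fun n _ => hexp n)]
    rw [Finset.sum_comm]
    refine Finset.sum_congr rfl (fun t _ => ?_)
    rw [← Finset.mul_sum]
    congr 1
    rw [Finset.sum_boole]
    norm_cast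
    exact aux_card_multiples N _
  -- the main term as an alternating sum
  have hmain : (N : ℝ) * ∏ p ∈ P, (1 - 1/(m p : ℝ))
      = ∑ t ∈ P.powerset, (-1 : ℝ) ^ t.card * ((N : ℝ) / ((∏ p ∈ t, m p : ℕ) : ℝ)) := by
    have h0 : ∀ p ∈ P, (1 : ℝ) - 1/(m p : ℝ) = (-(1/(m p : ℝ))) + 1 := fun p _ => by ring
    rw [Finset.prod_congr rfl h0, Finset.prod_add, Finset.mul_sum]
    refine Finset.sum_congr rfl (fun t ht => ?_)
    rw [Finset.prod_const_one, mul_one]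
    have h1 : ∏ p ∈ t, (-(1/(m p : ℝ))) = (-1 : ℝ) ^ t.card * ∏ p ∈ t, (1/(m p : ℝ)) := by
      rw [← Finset.prod_const (-1 : ℝ), ← Finset.prod_mul_distrib]
      exact Finset.prod_congr rfl (fun p _ => by ring)
    rw [h1]
    have h2 : ∏ p ∈ t, (1/(m p : ℝ)) = 1 / ((∏ p ∈ t, m p : ℕ) : ℝ) := by
      rw [Nat.cast_prod, one_div, ← Finset.prod_inv_distrib]
      exact Finset.prod_congr rfl (fun p _ => one_div _)
    rw [h2]
    ring
  rw [hcount, hmain, ← Finset.sum_sub_distrib]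
  have hbound : ∀ t ∈ P.powerset,
      |(-1 : ℝ) ^ t.card * ((N / (∏ p ∈ t, m p) : ℕ) : ℝ)
        - (-1 : ℝ) ^ t.card * ((N : ℝ) / ((∏ p ∈ t, m p : ℕ) : ℝ))| ≤ 1 := by
    intro t ht
    rw [← mul_sub, abs_mul, abs_pow, abs_neg, abs_one, one_pow, one_mul]
    refine aux_div_cast_bounds N _ ?_
    exact Finset.one_le_prod' (fun p hp => hm p (Finset.mem_powerset.mp ht hp))
  calc |∑ t ∈ P.powerset, ((-1 : ℝ) ^ t.card * ((N / (∏ p ∈ t, m p) : ℕ) : ℝ)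
        - (-1 : ℝ) ^ t.card * ((N : ℝ) / ((∏ p ∈ t, m p : ℕ) : ℝ)))|
      ≤ ∑ t ∈ P.powerset, |(-1 : ℝ) ^ t.card * ((N / (∏ p ∈ t, m p) : ℕ) : ℝ)
        - (-1 : ℝ) ^ t.card * ((N : ℝ) / ((∏ p ∈ t, m p : ℕ) : ℝ))| :=
        Finset.abs_sum_le_sum_abs _ _
    _ ≤ ∑ t ∈ P.powerset, 1 := Finset.sum_le_sum hbound
    _ = (2 : ℝ) ^ P.card := by
        rw [Finset.sum_const, Finset.card_powerset]
        simp

set_option maxHeartbeats 2000000 in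
theorem density_lower_bound
    (g : ArithmeticFunction ℂ) (hg : g.IsMultiplicative)
    (d : ℝ) (hd : HasDensity {n : ℕ | g n ≠ 0} d) :
    d ≥ 6 / Real.pi ^ 2 *
      ∏' p : {p : ℕ // p.Prime ∧ g p = 0}, (1 + 1 / ((p : ℕ) : ℝ))⁻¹ := by
  classical
  rw [ge_iff_le]
  by_cases hsum : Summable (fun p : ℕ => if p.Prime ∧ g p = 0 then 1/(p:ℝ) else 0)
  case neg =>
    have hprod0 : (∏' p : {p : ℕ // p.Prime ∧ g p = 0}, (1 + 1 / ((p : ℕ) : ℝ))⁻¹) = 0 := by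
      have hnotsub : ¬ Summable (fun q : {p : ℕ // p.Prime ∧ g p = 0} => 1/((q : ℕ) : ℝ)) := by
        intro hsub
        apply hsum
        have hsub' : Summable ((fun p : ℕ => 1/(p:ℝ)) ∘
            ((↑) : ({p : ℕ | p.Prime ∧ g p = 0} : Set ℕ) → ℕ)) := hsub
        rw [summable_subtype_iff_indicator] at hsub'
        refine hsub'.congr (fun p => ?_)
        by_cases hp : p.Prime ∧ g p = 0
        · simp [Set.indicator_apply, Set.mem_setOf_eq, hp]
        · simp [Set.indicator_apply, Set.mem_setOf_eq, hp]
      have hub : ∀ C : ℝ, ∃ t : Finset {p : ℕ // p.Prime ∧ g p = 0},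
          C < ∑ q ∈ t, 1/((q : ℕ) : ℝ) := by
        intro C
        by_contra hC
        push_neg at hC
        exact hnotsub (summable_of_sum_le (fun q => by positivity) hC)
      set F : Finset {p : ℕ // p.Prime ∧ g p = 0} → ℝ :=
        fun t => ∏ q ∈ t, (1 + 1/((q : ℕ) : ℝ))⁻¹ with hF
      have hterm_pos : ∀ q : {p : ℕ // p.Prime ∧ g p = 0}, 0 < (1 + 1/((q : ℕ) : ℝ))⁻¹ := by
        intro q; positivity
      have hterm_le1 : ∀ q : {p : ℕ // p.Prime ∧ g p = 0}, (1 + 1/((q : ℕ) : ℝ))⁻¹ ≤ 1 := by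
        intro q
        have h0 : (0:ℝ) ≤ 1/((q : ℕ) : ℝ) := by positivity
        rw [inv_le_one_iff₀]
        right; linarith
      have hFpos : ∀ t, 0 < F t := fun t => Finset.prod_pos (fun q _ => hterm_pos q)
      have hanti : Antitone F := by
        intro t t' htt'
        rw [hF]
        dsimp only
        rw [← Finset.prod_sdiff htt']
        have h1 : ∏ q ∈ t' \ t, (1 + 1/((q : ℕ) : ℝ))⁻¹ ≤ 1 :=
          Finset.prod_le_one (fun q _ => (hterm_pos q).le) (fun q _ => hterm_le1 q)
        have h2 : (0:ℝ) < ∏ q ∈ t, (1 + 1/((q : ℕ) : ℝ))⁻¹ :=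
          Finset.prod_pos (fun q _ => hterm_pos q)
        nlinarith
      have hbdd : BddBelow (Set.range F) := by
        refine ⟨0, ?_⟩
        rintro x ⟨t, rfl⟩
        exact (hFpos t).le
      have htend := tendsto_atTop_ciInf hanti hbdd
      have hinf : (⨅ t, F t) = 0 := by
        refine le_antisymm ?_ (le_ciInf fun t => (hFpos t).le)
        by_contra hpos
        push_neg at hpos
        obtain ⟨t, ht⟩ := hub (⨅ t, F t)⁻¹
        have h3 : F t = (∏ q ∈ t, (1 + 1/((q : ℕ) : ℝ)))⁻¹ := by
          rw [hF]
          dsimp only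
          rw [← Finset.prod_inv_distrib]
        have h2 := aux_prod_one_add_ge t (fun q => 1/((q : ℕ) : ℝ)) (fun q _ => by positivity)
        have h5 : (⨅ t, F t)⁻¹ < ∏ q ∈ t, (1 + 1/((q : ℕ) : ℝ)) := by linarith
        have h6 : F t < ⨅ t, F t := by
          rw [h3]
          have hPpos : (0:ℝ) < ∏ q ∈ t, (1 + 1/((q : ℕ) : ℝ)) :=
            Finset.prod_pos (fun q _ => by positivity)
          have := (inv_lt_inv₀ hPpos (inv_pos.mpr hpos)).mpr h5
          rwa [inv_inv] at this
        exact absurd (ciInf_le hbdd t) (not_le.mpr h6)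
      have hHP : HasProd (fun q : {p : ℕ // p.Prime ∧ g p = 0} => (1 + 1/((q : ℕ) : ℝ))⁻¹) 0 := by
        rw [HasProd, ← hinf]
        exact htend
      exact hHP.tprod_eq
    rw [hprod0, mul_zero]
    exact ge_of_tendsto' hd (fun N => by positivity)
  case pos =>
    set f₀ : ℕ → ℝ := fun p => if p.Prime ∧ g p = 0 then 1/(p:ℝ) else 0 with hf₀
    have hf₀nn : ∀ p, 0 ≤ f₀ p := fun p => by rw [hf₀]; dsimp only; split <;> positivity
    have hf₂ : Summable (fun n : ℕ => 1/(n:ℝ)^2) := Real.summable_one_div_nat_pow.mpr one_lt_two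
    set e : ℕ → ℕ := fun p => if g p = 0 then 1 else 2 with he
    set m : ℕ → ℕ := fun p => p ^ e p with hm
    have hele : ∀ p, e p ≤ 2 := fun p => by rw [he]; dsimp only; split <;> norm_num
    have hepos : ∀ p, 1 ≤ e p := fun p => by rw [he]; dsimp only; split <;> norm_num
    have hmge : ∀ p : ℕ, p.Prime → 2 ≤ m p := by
      intro p hp
      rw [hm]
      calc 2 ≤ p := hp.two_le
      _ = p ^ 1 := (pow_one p).symm
      _ ≤ p ^ e p := Nat.pow_le_pow_right hp.pos (hepos p)
    have hminv : ∀ p : ℕ, p.Prime → 1/(m p : ℝ) ≤ f₀ p + 1/(p:ℝ)^2 := by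
      intro p hp
      have hp0 : (0:ℝ) < p := by exact_mod_cast hp.pos
      by_cases h0 : g p = 0
      · have : m p = p := by rw [hm, he]; simp [h0]
        rw [this, hf₀]
        simp only [hp, h0, and_self, if_true]
        have : (0:ℝ) ≤ 1/(p:ℝ)^2 := by positivity
        linarith
      · have : m p = p^2 := by rw [hm, he]; simp [h0]
        rw [this, hf₀]
        simp only [h0, and_false, if_false]
        push_cast
        linarith
    -- partial products and tails
    set P : ℕ → Finset ℕ := fun y => (Finset.range (y+1)).filter Nat.Prime with hP
    set δ : ℕ → ℝ := fun y => ∏ p ∈ P y, (1 - 1/(m p : ℝ)) with hδ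
    set ε₁ : ℕ → ℝ := fun y => ∑' p, if y < p then f₀ p else 0 with hε₁
    set ε₂ : ℕ → ℝ := fun y => ∑' p, if y < p then 1/(p:ℝ)^2 else 0 with hε₂
    have hsume₁ : ∀ y, Summable (fun p => if y < p then f₀ p else 0) := by
      intro y
      refine Summable.of_nonneg_of_le (fun p => ?_) (fun p => ?_) hsum
      · split
        · exact hf₀nn p
        · exact le_refl 0
      · split
        · exact le_refl _
        · exact hf₀nn p
    have hsume₂ : ∀ y, Summable (fun p : ℕ => if y < p then 1/(p:ℝ)^2 else 0) := by
      intro y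
      refine Summable.of_nonneg_of_le (fun p => ?_) (fun p => ?_) hf₂
      · split <;> positivity
      · split; · exact le_refl _
        · positivity
    -- the key counting estimate
    have hkey : ∀ y N : ℕ, 1 ≤ N →
        δ y - 2^((P y).card)/(N:ℝ) - ε₁ y - ε₂ y ≤ (cnt {n : ℕ | g n ≠ 0} N : ℝ)/N := by
      intro y N hN
      have hNpos : (0:ℝ) < N := by exact_mod_cast hN
      set Good : Finset ℕ := (Finset.Icc 1 N).filter (fun n => ∀ p ∈ P y, ¬ m p ∣ n) with hGoodDef
      set Bad1 : Finset ℕ := (Finset.Icc 1 N).filter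
        (fun n => ∃ p : ℕ, p.Prime ∧ g p = 0 ∧ y < p ∧ p ∣ n) with hBad1Def
      set Bad2 : Finset ℕ := (Finset.Icc 1 N).filter
        (fun n => ∃ p : ℕ, p.Prime ∧ y < p ∧ p^2 ∣ n) with hBad2Def
      set suppF : Finset ℕ := (Finset.Icc 1 N).filter (fun n => g n ≠ 0) with hsuppFDef
      have hcnt : (cnt {n : ℕ | g n ≠ 0} N : ℝ) = suppF.card := by
        have hset : {n : ℕ | g n ≠ 0} ∩ Set.Icc 1 N = ↑suppF := by
          ext n
          simp only [hsuppFDef, Finset.coe_filter, Set.mem_inter_iff, Set.mem_setOf_eq,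
            Set.mem_Icc, Finset.mem_Icc]
          tauto
        rw [cnt, hset, Set.ncard_coe_finset]
      -- the good numbers support g
      have hsubset : Good \ (Bad1 ∪ Bad2) ⊆ suppF := by
        intro n hn
        rw [Finset.mem_sdiff, Finset.mem_union] at hn
        obtain ⟨hGood, hBad⟩ := hn
        push_neg at hBad
        obtain ⟨hB1, hB2⟩ := hBad
        have hIcc : n ∈ Finset.Icc 1 N := (Finset.mem_filter.mp hGood).1
        have hg1 : ∀ p ∈ P y, ¬ m p ∣ n := (Finset.mem_filter.mp hGood).2
        have hnB1 : ¬ (∃ p : ℕ, p.Prime ∧ g p = 0 ∧ y < p ∧ p ∣ n) := fun h =>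
          hB1 (Finset.mem_filter.mpr ⟨hIcc, h⟩)
        have hnB2 : ¬ (∃ p : ℕ, p.Prime ∧ y < p ∧ p^2 ∣ n) := fun h =>
          hB2 (Finset.mem_filter.mpr ⟨hIcc, h⟩)
        have hn1 : n ≠ 0 := by
          have := (Finset.mem_Icc.mp hIcc).1; omega
        have hmemP : ∀ p : ℕ, p.Prime → p ≤ y → p ∈ P y := by
          intro p hp hpy
          rw [hP]
          exact Finset.mem_filter.mpr ⟨Finset.mem_range.mpr (by omega), hp⟩
        have hsqf : Squarefree n := by
          rw [Nat.squarefree_iff_prime_squarefree]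
          intro p hp hdvd
          have hp' : p.Prime := hp
          by_cases hpy : p ≤ y
          · refine hg1 p (hmemP p hp' hpy) ?_
            have h1 : m p ∣ p ^ 2 := by
              rw [hm]
              exact pow_dvd_pow p (hele p)
            exact h1.trans (by rwa [pow_two])
          · exact hnB2 ⟨p, hp', by omega, by rwa [pow_two]⟩
        have hfac : ∀ p : ℕ, p.Prime → p ∣ n → g p ≠ 0 := by
          intro p hp hdvd hzero
          by_cases hpy : p ≤ y
          · refine hg1 p (hmemP p hp hpy) ?_
            have : m p = p := by rw [hm, he]; simp [hzero]
            rwa [this]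
          · exact hnB1 ⟨p, hp, hzero, by omega, hdvd⟩
        refine Finset.mem_filter.mpr ⟨hIcc, ?_⟩
        rw [hg.multiplicative_factorization g hn1]
        rw [Finsupp.prod]
        rw [Finset.prod_ne_zero_iff]
        intro p hp
        rw [Nat.support_factorization] at hp
        have hpp : p.Prime := Nat.prime_of_mem_primeFactors hp
        have hpd : p ∣ n := Nat.dvd_of_mem_primeFactors hp
        have hfe : n.factorization p = 1 := by
          have hle := hsqf.natFactorization_le_one p
          have hge : 1 ≤ n.factorization p :=
            (hpp.dvd_iff_one_le_factorization hn1).mp hpd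
          omega
        rw [hfe, pow_one]
        exact hfac p hpp hpd
      -- sieve bound for Good
      have hmge1 : ∀ p ∈ P y, 1 ≤ m p := by
        intro p hp
        have hpp : p.Prime := (Finset.mem_filter.mp hp).2
        have := hmge p hpp
        omega
      have hcop : ((P y : Finset ℕ) : Set ℕ).Pairwise fun p q => Nat.Coprime (m p) (m q) := by
        intro p hp q hq hpq
        have hp' := Finset.mem_coe.mp hp
        have hq' := Finset.mem_coe.mp hq
        rw [hP, Finset.mem_filter] at hp' hq'
        rw [hm]
        exact Nat.Coprime.pow (e p) (e q) ((Nat.coprime_primes hp'.2 hq'.2).mpr hpq)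
      have hGoodBound := aux_sieve_count N (P y) m hmge1 hcop
      rw [← hGoodDef] at hGoodBound
      have hGoodLB : (N:ℝ) * δ y - 2^((P y).card) ≤ (Good.card : ℝ) := by
        have h1 := (abs_le.mp hGoodBound).1
        have h2 : δ y = ∏ p ∈ P y, (1 - 1/(m p : ℝ)) := by rw [hδ]
        rw [h2]
        linarith
      -- Bad1 bound
      have hBad1Bound : (Bad1.card : ℝ) ≤ (N:ℝ) * ε₁ y := by
        set F₁ : Finset ℕ := (Finset.Ioc y N).filter (fun p => p.Prime ∧ g p = 0) with hF₁
        have hsub1 : Bad1 ⊆ F₁.biUnion (fun p => (Finset.Icc 1 N).filter (fun n => p ∣ n)) := by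
          intro n hn
          rw [hBad1Def, Finset.mem_filter] at hn
          obtain ⟨hIcc, p, hp, hg0, hyp, hdvd⟩ := hn
          refine Finset.mem_biUnion.mpr ⟨p, ?_, Finset.mem_filter.mpr ⟨hIcc, hdvd⟩⟩
          refine Finset.mem_filter.mpr ⟨Finset.mem_Ioc.mpr ⟨hyp, ?_⟩, hp, hg0⟩
          have h1 : 1 ≤ n := (Finset.mem_Icc.mp hIcc).1
          exact le_trans (Nat.le_of_dvd (by omega) hdvd) (Finset.mem_Icc.mp hIcc).2
        have hc1 : (Bad1.card : ℝ) ≤ ∑ p ∈ F₁, ((N / p : ℕ) : ℝ) := by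
          have h1 := Finset.card_le_card hsub1
          have h2 := Finset.card_biUnion_le (s := F₁)
            (t := fun p => (Finset.Icc 1 N).filter (fun n => p ∣ n))
          have h3 : ∀ p ∈ F₁, ((Finset.Icc 1 N).filter (fun n => p ∣ n)).card = N / p :=
            fun p _ => aux_card_multiples N p
          have h4 : (Bad1.card : ℕ) ≤ ∑ p ∈ F₁, N / p := by
            calc Bad1.card ≤ _ := h1
            _ ≤ ∑ p ∈ F₁, ((Finset.Icc 1 N).filter (fun n => p ∣ n)).card := h2
            _ = ∑ p ∈ F₁, N / p := Finset.sum_congr rfl h3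
          exact_mod_cast h4
        have hc2 : ∑ p ∈ F₁, ((N / p : ℕ) : ℝ) ≤ ∑ p ∈ F₁, (N:ℝ) * (if y < p then f₀ p else 0) := by
          refine Finset.sum_le_sum (fun p hp => ?_)
          rw [hF₁, Finset.mem_filter, Finset.mem_Ioc] at hp
          obtain ⟨⟨hyp, hpN⟩, hpp, hg0⟩ := hp
          rw [if_pos hyp, hf₀]
          simp only [hpp, hg0, and_self, if_true]
          calc ((N / p : ℕ) : ℝ) ≤ (N:ℝ) / p := Nat.cast_div_le
          _ = (N:ℝ) * (1 / p) := by ring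
        have hc3 : ∑ p ∈ F₁, (if y < p then f₀ p else 0) ≤ ε₁ y := by
          rw [hε₁]
          refine Summable.sum_le_tsum F₁ (fun p _ => ?_) (hsume₁ y)
          split
          · exact hf₀nn p
          · exact le_refl 0
        calc (Bad1.card : ℝ) ≤ _ := hc1
        _ ≤ _ := hc2
        _ = (N:ℝ) * ∑ p ∈ F₁, (if y < p then f₀ p else 0) := by rw [Finset.mul_sum]
        _ ≤ (N:ℝ) * ε₁ y := by
            have := hc3
            nlinarith
      -- Bad2 bound
      have hBad2Bound : (Bad2.card : ℝ) ≤ (N:ℝ) * ε₂ y := by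
        set F₂ : Finset ℕ := (Finset.Ioc y N).filter (fun p => p.Prime) with hF₂
        have hsub2 : Bad2 ⊆ F₂.biUnion (fun p => (Finset.Icc 1 N).filter (fun n => p^2 ∣ n)) := by
          intro n hn
          rw [hBad2Def, Finset.mem_filter] at hn
          obtain ⟨hIcc, p, hp, hyp, hdvd⟩ := hn
          refine Finset.mem_biUnion.mpr ⟨p, ?_, Finset.mem_filter.mpr ⟨hIcc, hdvd⟩⟩
          refine Finset.mem_filter.mpr ⟨Finset.mem_Ioc.mpr ⟨hyp, ?_⟩, hp⟩
          have h1 : 1 ≤ n := (Finset.mem_Icc.mp hIcc).1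
          have h2 : p ≤ p^2 := Nat.le_self_pow (by norm_num) p
          exact le_trans (h2.trans (Nat.le_of_dvd (by omega) hdvd)) (Finset.mem_Icc.mp hIcc).2
        have hc1 : (Bad2.card : ℝ) ≤ ∑ p ∈ F₂, ((N / p^2 : ℕ) : ℝ) := by
          have h1 := Finset.card_le_card hsub2
          have h2 := Finset.card_biUnion_le (s := F₂)
            (t := fun p => (Finset.Icc 1 N).filter (fun n => p^2 ∣ n))
          have h3 : ∀ p ∈ F₂, ((Finset.Icc 1 N).filter (fun n => p^2 ∣ n)).card = N / p^2 :=
            fun p _ => aux_card_multiples N (p^2)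
          have h4 : (Bad2.card : ℕ) ≤ ∑ p ∈ F₂, N / p^2 := by
            calc Bad2.card ≤ _ := h1
            _ ≤ ∑ p ∈ F₂, ((Finset.Icc 1 N).filter (fun n => p^2 ∣ n)).card := h2
            _ = ∑ p ∈ F₂, N / p^2 := Finset.sum_congr rfl h3
          exact_mod_cast h4
        have hc2 : ∑ p ∈ F₂, ((N / p^2 : ℕ) : ℝ)
            ≤ ∑ p ∈ F₂, (N:ℝ) * (if y < p then 1/(p:ℝ)^2 else 0) := by
          refine Finset.sum_le_sum (fun p hp => ?_)
          rw [hF₂, Finset.mem_filter, Finset.mem_Ioc] at hp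
          obtain ⟨⟨hyp, hpN⟩, hpp⟩ := hp
          rw [if_pos hyp]
          calc ((N / p^2 : ℕ) : ℝ) ≤ (N:ℝ) / (p^2 : ℕ) := Nat.cast_div_le
          _ = (N:ℝ) * (1 / (p:ℝ)^2) := by push_cast; ring
        have hc3 : ∑ p ∈ F₂, (if y < p then 1/(p:ℝ)^2 else 0) ≤ ε₂ y := by
          rw [hε₂]
          refine Summable.sum_le_tsum F₂ (fun p _ => ?_) (hsume₂ y)
          split
          · positivity
          · exact le_refl 0
        calc (Bad2.card : ℝ) ≤ _ := hc1
        _ ≤ _ := hc2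
        _ = (N:ℝ) * ∑ p ∈ F₂, (if y < p then 1/(p:ℝ)^2 else 0) := by rw [Finset.mul_sum]
        _ ≤ (N:ℝ) * ε₂ y := by nlinarith
      -- combine the cardinalities
      have hcards : (Good.card : ℝ) - (Bad1.card : ℝ) - (Bad2.card : ℝ) ≤ (suppF.card : ℝ) := by
        have h1 : Good.card ≤ (Good \ (Bad1 ∪ Bad2)).card + (Bad1 ∪ Bad2).card := by
          have hsub : Good ⊆ (Good \ (Bad1 ∪ Bad2)) ∪ (Bad1 ∪ Bad2) := by
            intro n hn
            rw [Finset.mem_union, Finset.mem_sdiff]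
            by_cases h : n ∈ Bad1 ∪ Bad2
            · exact Or.inr h
            · exact Or.inl ⟨hn, h⟩
          calc Good.card ≤ _ := Finset.card_le_card hsub
          _ ≤ _ := Finset.card_union_le _ _
        have h2 : (Bad1 ∪ Bad2).card ≤ Bad1.card + Bad2.card := Finset.card_union_le _ _
        have h3 : (Good \ (Bad1 ∪ Bad2)).card ≤ suppF.card := Finset.card_le_card hsubset
        have h5 : Good.card ≤ suppF.card + Bad1.card + Bad2.card := by omega
        have h4 : (Good.card : ℝ) ≤ (suppF.card : ℝ) + Bad1.card + Bad2.card := by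
          exact_mod_cast h5
        linarith
      -- final arithmetic
      rw [hcnt]
      have hfinal : (N:ℝ) * δ y - 2^((P y).card) - (N:ℝ) * ε₁ y - (N:ℝ) * ε₂ y
          ≤ (suppF.card : ℝ) := by linarith
      calc (δ y - 2^((P y).card)/(N:ℝ) - ε₁ y - ε₂ y)
          = ((N:ℝ) * δ y - 2^((P y).card) - (N:ℝ) * ε₁ y - (N:ℝ) * ε₂ y) / N := by
            field_simp
      _ ≤ (suppF.card : ℝ) / N := by gcongr

    -- limit in N
    have hstep1 : ∀ y, δ y - ε₁ y - ε₂ y ≤ d := by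
      intro y
      have htend1 : Filter.Tendsto (fun N : ℕ => δ y - 2^((P y).card)/(N:ℝ) - ε₁ y - ε₂ y)
          Filter.atTop (nhds (δ y - 0 - ε₁ y - ε₂ y)) := by
        refine Filter.Tendsto.sub (Filter.Tendsto.sub (Filter.Tendsto.sub tendsto_const_nhds ?_)
          tendsto_const_nhds) tendsto_const_nhds
        exact tendsto_const_div_atTop_nhds_zero_nat _
      have hev : ∀ᶠ N : ℕ in Filter.atTop,
          δ y - 2^((P y).card)/(N:ℝ) - ε₁ y - ε₂ y ≤ (cnt {n : ℕ | g n ≠ 0} N : ℝ)/N :=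
        Filter.eventually_atTop.mpr ⟨1, fun N hN => hkey y N hN⟩
      have := le_of_tendsto_of_tendsto htend1 hd hev
      simpa using this
    -- multipliability of the full product
    have hfm : Summable (fun q : Nat.Primes => 1/((m (q : ℕ)) : ℝ)) := by
      refine Summable.of_nonneg_of_le (fun q => by positivity) (fun q => hminv (q : ℕ) q.2)
        ((hsum.add hf₂).comp_injective Subtype.val_injective)
    have hamult : Multipliable (fun q : Nat.Primes => 1 - 1/((m (q : ℕ)) : ℝ)) := by
      refine aux_multipliable_of_half _ (fun q => ?_) (fun q => ?_) ?_
      · have h2 : (2:ℝ) ≤ ((m (q:ℕ) : ℕ) : ℝ) := by exact_mod_cast hmge (q:ℕ) q.2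
        have : 1/((m (q:ℕ) : ℕ) : ℝ) ≤ 1/2 := by
          apply one_div_le_one_div_of_le <;> linarith
        linarith
      · have h2 : (2:ℝ) ≤ ((m (q:ℕ) : ℕ) : ℝ) := by exact_mod_cast hmge (q:ℕ) q.2
        have : 0 < 1/((m (q:ℕ) : ℕ) : ℝ) := by positivity
        linarith
      · refine hfm.congr (fun q => by ring)
    set Δ : ℝ := ∏' q : Nat.Primes, (1 - 1/((m (q : ℕ)) : ℝ)) with hΔ
    have hδtend : Filter.Tendsto δ Filter.atTop (nhds Δ) := by
      have hp := hamult.hasProd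
      rw [HasProd] at hp
      have hmono : Monotone (fun y : ℕ => (Finset.range (y+1)).subtype Nat.Prime) := by
        intro a b hab q hq
        rw [Finset.mem_subtype] at hq ⊢
        rw [Finset.mem_range] at hq ⊢
        omega
      have hexh : Filter.Tendsto (fun y : ℕ => (Finset.range (y+1)).subtype Nat.Prime)
          Filter.atTop Filter.atTop := by
        refine tendsto_atTop_finset_of_monotone hmono (fun q => ⟨(q : ℕ), ?_⟩)
        rw [Finset.mem_subtype, Finset.mem_range]
        omega
      have hcomp := hp.comp hexh
      refine hcomp.congr (fun y => ?_)
      show ∏ q ∈ (Finset.range (y+1)).subtype Nat.Prime, (1 - 1/((m (q : ℕ)) : ℝ)) = δ y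
      rw [hδ, hP]
      dsimp only
      exact Finset.prod_subtype_eq_prod_filter (s := Finset.range (y+1)) (p := Nat.Prime)
        (fun p : ℕ => 1 - 1/((m p) : ℝ))
    have hdge : Δ ≤ d := by
      have htend : Filter.Tendsto (fun y => δ y - ε₁ y - ε₂ y) Filter.atTop (nhds (Δ - 0 - 0)) := by
        refine Filter.Tendsto.sub (Filter.Tendsto.sub hδtend ?_) ?_
        · rw [hε₁]; exact aux_tail_tendsto f₀ hsum
        · rw [hε₂]; exact aux_tail_tendsto _ hf₂
      refine le_of_tendsto' (by simpa using htend) hstep1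
    have hΔeq : Δ = 6 / Real.pi ^ 2 *
        ∏' p : {p : ℕ // p.Prime ∧ g p = 0}, (1 + 1 / ((p : ℕ) : ℝ))⁻¹ := by
      have hprime2 : ∀ q : Nat.Primes, (2:ℝ) ≤ ((q:ℕ):ℝ) := fun q => by
        exact_mod_cast q.2.two_le
      have hsq : Summable (fun q : Nat.Primes => (((q:ℕ):ℝ)^2)⁻¹) := by
        have h := hf₂.comp_injective
          (Subtype.val_injective : Function.Injective (Subtype.val : Nat.Primes → ℕ))
        refine h.congr (fun q => ?_)
        simp [one_div, Function.comp]
      have ha2mult : Multipliable (fun q : Nat.Primes => 1 - (((q:ℕ):ℝ)^2)⁻¹) := by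
        refine aux_multipliable_of_half _ (fun q => ?_) (fun q => ?_) ?_
        · have h2 := hprime2 q
          have h4 : (4:ℝ) ≤ ((q:ℕ):ℝ)^2 := by nlinarith
          have hle : (((q:ℕ):ℝ)^2)⁻¹ ≤ (4:ℝ)⁻¹ := by
            apply inv_anti₀ (by norm_num) h4
          norm_num at hle ⊢
          linarith
        · have h2 := hprime2 q
          have : (0:ℝ) < (((q:ℕ):ℝ)^2)⁻¹ := by positivity
          linarith
        · exact hsq.congr (fun q => by ring)
      have hcmult : Multipliable
          (fun q : Nat.Primes => if g (q:ℕ) = 0 then (1 + 1/((q:ℕ):ℝ))⁻¹ else 1) := by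
        refine aux_multipliable_of_half _ (fun q => ?_) (fun q => ?_) ?_
        · by_cases h0 : g (q:ℕ) = 0
          · rw [if_pos h0]
            have h2 := hprime2 q
            have hle : 1 + 1/((q:ℕ):ℝ) ≤ 2 := by
              have : 1/((q:ℕ):ℝ) ≤ 1 := by
                rw [div_le_one (by linarith)]; linarith
              linarith
            have hpos : (0:ℝ) < 1 + 1/((q:ℕ):ℝ) := by positivity
            have := inv_anti₀ hpos hle
            norm_num at this ⊢
            linarith
          · rw [if_neg h0]; norm_num
        · by_cases h0 : g (q:ℕ) = 0
          · rw [if_pos h0]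
            have h2 := hprime2 q
            have hx : (0:ℝ) ≤ 1/((q:ℕ):ℝ) := by positivity
            rw [inv_le_one_iff₀]
            right; linarith
          · rw [if_neg h0]
        · have hs := hsum.comp_injective
            (Subtype.val_injective : Function.Injective (Subtype.val : Nat.Primes → ℕ))
          refine Summable.of_nonneg_of_le (fun q => ?_) (fun q => ?_) hs
          · by_cases h0 : g (q:ℕ) = 0
            · rw [if_pos h0]
              have h2 := hprime2 q
              have hx : (0:ℝ) ≤ 1/((q:ℕ):ℝ) := by positivity
              have : (1 + 1/((q:ℕ):ℝ))⁻¹ ≤ 1 := by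
                rw [inv_le_one_iff₀]; right; linarith
              linarith
            · rw [if_neg h0]; norm_num
          · by_cases h0 : g (q:ℕ) = 0
            · rw [if_pos h0]
              have h2 := hprime2 q
              have hq0 : (0:ℝ) < ((q:ℕ):ℝ) := by linarith
              have hf : f₀ (q:ℕ) = 1/((q:ℕ):ℝ) := by
                rw [hf₀]; simp [q.2, h0]
              show (1:ℝ) - (1 + 1/((q:ℕ):ℝ))⁻¹ ≤ f₀ (q:ℕ)
              rw [hf]
              have hx : (0:ℝ) < 1/((q:ℕ):ℝ) := by positivity
              have hpos : (0:ℝ) < 1 + 1/((q:ℕ):ℝ) := by linarith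
              have key : 1 - 1/((q:ℕ):ℝ) ≤ (1 + 1/((q:ℕ):ℝ))⁻¹ := by
                rw [inv_eq_one_div, le_div_iff₀ hpos]
                nlinarith
              linarith
            · rw [if_neg h0]
              show (1:ℝ) - 1 ≤ f₀ (q:ℕ)
              rw [sub_self]
              exact hf₀nn _
      have hsplit : ∀ q : Nat.Primes, 1 - 1/((m (q:ℕ)) : ℝ)
          = (1 - (((q:ℕ):ℝ)^2)⁻¹) * (if g (q:ℕ) = 0 then (1 + 1/((q:ℕ):ℝ))⁻¹ else 1) := by
        intro q
        have h2 := hprime2 q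
        have hq0 : ((q:ℕ):ℝ) ≠ 0 := by linarith
        by_cases h0 : g (q:ℕ) = 0
        · rw [if_pos h0]
          have hmq : m (q:ℕ) = (q:ℕ) := by rw [hm, he]; simp [h0]
          rw [hmq]
          have hpos : (0:ℝ) < 1 + 1/((q:ℕ):ℝ) := by positivity
          field_simp
          ring
        · rw [if_neg h0, mul_one]
          have hmq : m (q:ℕ) = (q:ℕ)^2 := by rw [hm, he]; simp [h0]
          rw [hmq]
          push_cast
          rw [one_div]
      have hΔsplit : Δ = (∏' q : Nat.Primes, (1 - (((q:ℕ):ℝ)^2)⁻¹))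
          * ∏' q : Nat.Primes, (if g (q:ℕ) = 0 then (1 + 1/((q:ℕ):ℝ))⁻¹ else 1) := by
        rw [hΔ, tprod_congr hsplit]
        exact Multipliable.tprod_mul ha2mult hcmult
      have hA : (∏' q : Nat.Primes, (1 - (((q:ℕ):ℝ)^2)⁻¹)) = 6 / Real.pi ^ 2 := by
        set F : ℕ →*₀ ℝ := aux_sqInvHom with hFdef
        have hFsum : Summable (fun n => ‖F n‖) := by
          refine hf₂.congr (fun n => ?_)
          rw [Real.norm_eq_abs]
          rw [show F n = ((n:ℝ)^2)⁻¹ from rfl]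
          rw [abs_of_nonneg (by positivity), one_div]
        have hEuler := EulerProduct.eulerProduct_completely_multiplicative_hasProd (f := F) hFsum
        have htsum : ∑' n : ℕ, F n = Real.pi^2/6 := by
          rw [← hasSum_zeta_two.tsum_eq]
          refine tsum_congr (fun n => ?_)
          rw [show F n = ((n:ℝ)^2)⁻¹ from rfl, one_div]
        rw [htsum] at hEuler
        have haP := ha2mult.hasProd
        have hmul := haP.mul hEuler
        have hone : (fun q : Nat.Primes => (1 - (((q:ℕ):ℝ)^2)⁻¹) * (1 - F (q:ℕ))⁻¹)
            = fun _ : Nat.Primes => (1:ℝ) := by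
          funext q
          have h2 := hprime2 q
          have h4 : (4:ℝ) ≤ ((q:ℕ):ℝ)^2 := by nlinarith
          rw [show F (q:ℕ) = (((q:ℕ):ℝ)^2)⁻¹ from rfl]
          have hle : (((q:ℕ):ℝ)^2)⁻¹ ≤ (4:ℝ)⁻¹ := by
            apply inv_anti₀ (by norm_num) h4
          have hne : 1 - (((q:ℕ):ℝ)^2)⁻¹ ≠ 0 := by
            norm_num at hle
            intro hzero
            have : (((q:ℕ):ℝ)^2)⁻¹ = 1 := by linarith
            linarith
          exact mul_inv_cancel₀ hne
        rw [hone] at hmul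
        have huniq : (∏' q : Nat.Primes, (1 - (((q:ℕ):ℝ)^2)⁻¹)) * (Real.pi^2/6) = 1 :=
          hmul.unique hasProd_one
        have hπ : Real.pi ≠ 0 := Real.pi_ne_zero
        field_simp at huniq ⊢
        linarith
      have hC : (∏' q : Nat.Primes, (if g (q:ℕ) = 0 then (1 + 1/((q:ℕ):ℝ))⁻¹ else 1))
          = ∏' p : {p : ℕ // p.Prime ∧ g p = 0}, (1 + 1 / ((p : ℕ) : ℝ))⁻¹ := by
        have h1 : (∏' q : Nat.Primes, (if g (q:ℕ) = 0 then (1 + 1/((q:ℕ):ℝ))⁻¹ else 1))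
            = ∏' n : ℕ, Set.mulIndicator {r : ℕ | r.Prime}
                (fun p => if g p = 0 then (1 + 1/(p:ℝ))⁻¹ else 1) n :=
          tprod_subtype {r : ℕ | r.Prime} (fun p => if g p = 0 then (1 + 1/(p:ℝ))⁻¹ else 1)
        have h2 : (∏' p : {p : ℕ // p.Prime ∧ g p = 0}, (1 + 1 / ((p : ℕ) : ℝ))⁻¹)
            = ∏' n : ℕ, Set.mulIndicator {r : ℕ | r.Prime ∧ g r = 0}
                (fun p => (1 + 1/(p:ℝ))⁻¹) n :=
          tprod_subtype {r : ℕ | r.Prime ∧ g r = 0} (fun p => (1 + 1/(p:ℝ))⁻¹)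
        rw [h1, h2]
        refine tprod_congr (fun n => ?_)
        by_cases hp : n.Prime
        · by_cases h0 : g n = 0
          · rw [Set.mulIndicator_of_mem (show n ∈ {r : ℕ | r.Prime} from hp) _,
              Set.mulIndicator_of_mem (show n ∈ {r : ℕ | r.Prime ∧ g r = 0} from ⟨hp, h0⟩) _,
              if_pos h0]
          · rw [Set.mulIndicator_of_mem (show n ∈ {r : ℕ | r.Prime} from hp) _,
              Set.mulIndicator_of_notMem
                (show n ∉ {r : ℕ | r.Prime ∧ g r = 0} from fun hc => h0 hc.2) _,
              if_neg h0]
        · rw [Set.mulIndicator_of_notMem (show n ∉ {r : ℕ | r.Prime} from hp) _,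
            Set.mulIndicator_of_notMem
              (show n ∉ {r : ℕ | r.Prime ∧ g r = 0} from fun hc => hp hc.1) _]
      rw [hΔsplit, hA, hC]
    rw [← hΔeq]
    exact hdge
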